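/- Let m and N be positive integers, let σ ∈ S_m be the standard long cycle, and let α ∈ S_m be any permutation. Then the element w_{gl(N)}(α) = ∑_{i : {1,…,m} → {1,…,N}} ι(E_{i(1), i(α(1))}) · ι(E_{i(2), i(α(2))}) ⋯ ι(E_{i(m), i(α(m))}) of the universal enveloping algebra U(gl(N)) lies in the center of U(gl(N)). -/

import Mathlib

open scoped BigOperators

attribute [local instance 100] LieRing.ofAssociativeRing

/-- The matrix unit `E i j` in `gl(N)`, i.e. the `N × N` complex matrix with a `1` in
position `(i, j)` and `0` elsewhere. -/
noncomputable def glE (N : ℕ) (i j : Fin N) : Matrix (Fin N) (Fin N) ℂ :=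
  Matrix.single i j 1

/-- The universal `gl(N)`-weight system on a permutation `α` of `m` elements:
`w_{gl(N)}(α) = ∑_{i : Fin m → Fin N} ι(E_{i 1, i (α 1)}) ⋯ ι(E_{i m, i (α m)})`,
an element of the universal enveloping algebra of `gl(N)`. -/
noncomputable def wgl (m N : ℕ) (α : Equiv.Perm (Fin m)) :
    UniversalEnvelopingAlgebra ℂ (Matrix (Fin N) (Fin N) ℂ) :=
  ∑ i : Fin m → Fin N,
    ((List.finRange m).map fun k =>
      UniversalEnvelopingAlgebra.ι ℂ (glE N (i k) (i (α k)))).prod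

namespace WglAux

variable {A : Type*} [Ring A]

lemma lie_mul' (x a b : A) : ⁅x, a*b⁆ = ⁅x,a⁆*b + a*⁅x,b⁆ := by
  simp only [Ring.lie_def, sub_mul, mul_sub, mul_assoc]; abel

lemma lie_sum' {ι : Type*} (s : Finset ι) (x : A) (f : ι → A) :
    ⁅x, ∑ i ∈ s, f i⁆ = ∑ i ∈ s, ⁅x, f i⁆ := by
  simp [Ring.lie_def, Finset.mul_sum, Finset.sum_mul, Finset.sum_sub_distrib]

/-- The ordered product of `f` over `Fin m`. -/
def Pl (m : ℕ) (f : Fin m → A) : A := ((List.finRange m).map f).prod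

lemma Pl_succ (m : ℕ) (f : Fin (m+1) → A) :
    Pl (m+1) f = f 0 * Pl m (f ∘ Fin.succ) := by
  simp [Pl, List.finRange_succ, Function.comp]

/-- `Pl` depends on each slot as `p * y * s` for fixed `p, s`. -/
lemma Pl_update (m : ℕ) (f : Fin m → A) (l : Fin m) :
    ∃ p s : A, ∀ y, Pl m (Function.update f l y) = p * y * s := by
  induction m with
  | zero => exact l.elim0
  | succ n ih =>
    refine Fin.cases ?_ ?_ l
    · refine ⟨1, Pl n (f ∘ Fin.succ), fun y => ?_⟩
      have h : (Function.update f 0 y) ∘ Fin.succ = f ∘ Fin.succ := by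
        funext k; simp [Function.update_of_ne (Fin.succ_ne_zero k)]
      rw [Pl_succ, h, Function.update_self, one_mul]
    · intro j
      obtain ⟨p, s, h⟩ := ih (f ∘ Fin.succ) j
      refine ⟨f 0 * p, s, fun y => ?_⟩
      have h2 : (Function.update f j.succ y) ∘ Fin.succ
          = Function.update (f ∘ Fin.succ) j y :=
        Function.update_comp_eq_of_injective f (Fin.succ_injective n) j y
      rw [Pl_succ, Function.update_of_ne (Fin.succ_ne_zero j).symm, h2, h,
        mul_assoc, mul_assoc, mul_assoc]

/-- Leibniz rule for the bracket against an ordered product. -/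
lemma lie_Pl (m : ℕ) (x : A) (f : Fin m → A) :
    ⁅x, Pl m f⁆ = ∑ l : Fin m, Pl m (Function.update f l ⁅x, f l⁆) := by
  induction m with
  | zero => simp [Pl, Ring.lie_def]
  | succ n ih =>
    rw [Pl_succ, lie_mul', ih (f ∘ Fin.succ), Fin.sum_univ_succ, Finset.mul_sum]
    congr 1
    · have h : (Function.update f 0 ⁅x, f 0⁆) ∘ Fin.succ = f ∘ Fin.succ := by
        funext k; simp [Function.update_of_ne (Fin.succ_ne_zero k)]
      rw [Pl_succ, h, Function.update_self]
    · refine Finset.sum_congr rfl fun j _ => ?_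
      have h2 : (Function.update f j.succ ⁅x, f j.succ⁆) ∘ Fin.succ
          = Function.update (f ∘ Fin.succ) j ⁅x, (f ∘ Fin.succ) j⁆ :=
        Function.update_comp_eq_of_injective f (Fin.succ_injective n) j _
      rw [Pl_succ, Function.update_of_ne (Fin.succ_ne_zero j).symm, h2]

end WglAux

open WglAux

lemma glE_lie (N : ℕ) (a b c d : Fin N) :
    ⁅glE N a b, glE N c d⁆ =
      (if b = c then glE N a d else 0) - (if d = a then glE N c b else 0) := by
  have p1 : glE N a b * glE N c d = if b = c then glE N a d else 0 := by
    split_ifs with h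
    · subst h; simp [glE, Matrix.single_mul_single_same]
    · simp [glE, Matrix.single_mul_single_of_ne _ _ _ _ h]
  have p2 : glE N c d * glE N a b = if d = a then glE N c b else 0 := by
    split_ifs with h
    · subst h; simp [glE, Matrix.single_mul_single_same]
    · simp [glE, Matrix.single_mul_single_of_ne _ _ _ _ h]
  rw [Ring.lie_def, p1, p2]

/-- The key computation: the bracket of `ι (glE N a b)` with `wgl m N α` vanishes. -/
lemma key_lie (m N : ℕ) (α : Equiv.Perm (Fin m)) (a b : Fin N) :
    ⁅UniversalEnvelopingAlgebra.ι ℂ (glE N a b), wgl m N α⁆ = 0 := by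
  set ιU : Matrix (Fin N) (Fin N) ℂ →ₗ⁅ℂ⁆
      UniversalEnvelopingAlgebra ℂ (Matrix (Fin N) (Fin N) ℂ) :=
    UniversalEnvelopingAlgebra.ι ℂ with hιU
  set F : (Fin m → Fin N) → Fin m →
      UniversalEnvelopingAlgebra ℂ (Matrix (Fin N) (Fin N) ℂ) :=
    fun i k => ιU (glE N (i k) (i (α k))) with hF
  have hw : wgl m N α = ∑ i : Fin m → Fin N, Pl m (F i) := rfl
  rw [hw, lie_sum']
  have step : ∀ i : Fin m → Fin N,
      ⁅ιU (glE N a b), Pl m (F i)⁆ =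
      ∑ l : Fin m,
        ((if b = i l then Pl m (Function.update (F i) l (ιU (glE N a (i (α l))))) else 0)
         - (if i (α l) = a then Pl m (Function.update (F i) l (ιU (glE N (i l) b))) else 0)) := by
    intro i
    rw [lie_Pl]
    refine Finset.sum_congr rfl fun l _ => ?_
    obtain ⟨p, s, hps⟩ := Pl_update m (F i) l
    have hbr : ⁅ιU (glE N a b), F i l⁆
        = (if b = i l then ιU (glE N a (i (α l))) else 0)
          - (if i (α l) = a then ιU (glE N (i l) b) else 0) := by
      rw [hF]
      rw [← LieHom.map_lie, glE_lie, map_sub, apply_ite ιU, apply_ite ιU,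
        map_zero]
    rw [hbr, hps]
    split_ifs <;> simp [hps, mul_sub, sub_mul]
  rw [Finset.sum_congr rfl fun i _ => step i]
  simp only [Finset.sum_sub_distrib]
  rw [sub_eq_zero]
  rw [← Finset.sum_product' (f := fun i l => if b = i l then
        Pl m (Function.update (F i) l (ιU (glE N a (i (α l))))) else 0),
      ← Finset.sum_product' (f := fun i l => if i (α l) = a then
        Pl m (Function.update (F i) l (ιU (glE N (i l) b))) else 0)]
  rw [← Finset.sum_filter, ← Finset.sum_filter]
  refine Finset.sum_nbij' (fun x => (Function.update x.1 x.2 a, α⁻¹ x.2))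
    (fun x => (Function.update x.1 (α x.2) b, α x.2)) ?_ ?_ ?_ ?_ ?_
  · rintro ⟨i, l⟩ hx
    simp only [Finset.mem_filter, Finset.mem_product, Finset.mem_univ, true_and] at hx
    dsimp only
    simp only [Finset.mem_filter, Finset.mem_product, Finset.mem_univ, true_and]
    rw [Equiv.Perm.coe_inv, Equiv.apply_symm_apply, Function.update_self]
  · rintro ⟨i, l⟩ hx
    simp only [Finset.mem_filter, Finset.mem_product, Finset.mem_univ, true_and] at hx
    dsimp only
    simp [Finset.mem_filter]
  · rintro ⟨i, l⟩ hx
    simp only [Finset.mem_filter, Finset.mem_product, Finset.mem_univ, true_and] at hx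
    simp only [Equiv.Perm.coe_inv, Equiv.apply_symm_apply, Prod.mk.injEq]
    refine ⟨?_, by simp⟩
    rw [Function.update_idem, hx, Function.update_eq_self]
  · rintro ⟨i, l⟩ hx
    simp only [Finset.mem_filter, Finset.mem_product, Finset.mem_univ, true_and] at hx
    simp only [Equiv.Perm.coe_inv, Equiv.symm_apply_apply, Prod.mk.injEq]
    refine ⟨?_, by simp⟩
    rw [Function.update_idem, ← hx, Function.update_eq_self]
  · rintro ⟨i, l⟩ hx
    simp only [Finset.mem_filter, Finset.mem_product, Finset.mem_univ, true_and] at hx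
    -- hx : b = i l
    dsimp only
    congr 1
    funext k
    by_cases hk1 : k = α⁻¹ l
    · subst hk1
      rw [Function.update_self]
      by_cases he : (α⁻¹ l : Fin m) = l
      · have hal : α l = l := by
          conv_lhs => rw [← he]
          exact α.apply_symm_apply l
        rw [he]
        simp [hal, ← hx]
      · rw [Function.update_of_ne he, hF]
        simp only [Function.update_of_ne he, (show α (α⁻¹ l) = l from α.apply_symm_apply l), ← hx]
    · rw [Function.update_of_ne hk1]
      by_cases hk2 : k = l
      · subst hk2
        have hal : α k ≠ k := fun h => hk1 (Equiv.Perm.eq_inv_iff_eq.mpr h)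
        rw [Function.update_self, hF]
        simp only [Function.update_self, Function.update_of_ne hal]
      · have hak : α k ≠ l := fun h => hk1 (Equiv.Perm.eq_inv_iff_eq.mpr h)
        rw [Function.update_of_ne hk2, hF]
        simp only [Function.update_of_ne hk2, Function.update_of_ne hak]

/-- The element `w_{gl(N)}(α)` lies in the center of `U(gl(N))`. -/
theorem wgl_mem_center (m N : ℕ) (hm : 0 < m) (hN : 0 < N) (α : Equiv.Perm (Fin m)) :
    wgl m N α ∈ Subalgebra.center ℂ
      (UniversalEnvelopingAlgebra ℂ (Matrix (Fin N) (Fin N) ℂ)) := by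
  have hE : ∀ a b : Fin N,
      Commute (wgl m N α) (UniversalEnvelopingAlgebra.ι ℂ (glE N a b)) := by
    intro a b
    have h := key_lie m N α a b
    rw [Ring.lie_def, sub_eq_zero] at h
    exact h.symm
  have hX : ∀ X : Matrix (Fin N) (Fin N) ℂ,
      Commute (wgl m N α) (UniversalEnvelopingAlgebra.ι ℂ X) := by
    intro X
    set L : Matrix (Fin N) (Fin N) ℂ →ₗ[ℂ]
        UniversalEnvelopingAlgebra ℂ (Matrix (Fin N) (Fin N) ℂ) :=
      (UniversalEnvelopingAlgebra.ι ℂ (L := Matrix (Fin N) (Fin N) ℂ)).toLinearMap with hL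
    have hcoe : ∀ Y : Matrix (Fin N) (Fin N) ℂ,
        UniversalEnvelopingAlgebra.ι ℂ Y = L Y := fun _ => rfl
    have hXe : X = ∑ a : Fin N, ∑ c : Fin N, (X a c) • glE N a c := by
      conv_lhs => rw [Matrix.matrix_eq_sum_single X]
      refine Finset.sum_congr rfl fun a _ => Finset.sum_congr rfl fun c _ => ?_
      rw [glE, Matrix.smul_single, smul_eq_mul, mul_one]
    have happ : UniversalEnvelopingAlgebra.ι ℂ X
        = ∑ a : Fin N, ∑ c : Fin N,
            (X a c) • UniversalEnvelopingAlgebra.ι ℂ (glE N a c) := by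
      have h1 : L X = ∑ a : Fin N, ∑ c : Fin N, (X a c) • L (glE N a c) := by
        conv_lhs => rw [hXe]
        rw [map_sum]
        refine Finset.sum_congr rfl fun a _ => ?_
        rw [map_sum]
        exact Finset.sum_congr rfl fun c _ => map_smul L _ _
      rw [hcoe, h1]
      exact Finset.sum_congr rfl fun a _ => Finset.sum_congr rfl fun c _ => by rw [hcoe]
    rw [happ]
    exact Commute.sum_right _ _ _ fun a _ =>
      Commute.sum_right _ _ _ fun c _ => (hE a c).smul_right _
  have hall : ∀ y, Commute (wgl m N α) y := by
    intro y
    obtain ⟨t, rfl⟩ : ∃ t, UniversalEnvelopingAlgebra.mkAlgHom ℂ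
        (Matrix (Fin N) (Fin N) ℂ) t = y := RingCon.mkₐ_surjective (α := ℂ) _ y
    induction t using TensorAlgebra.induction with
    | algebraMap r => rw [AlgHom.commutes]; exact (Algebra.commutes r _).symm
    | ι x => rw [← UniversalEnvelopingAlgebra.ι_apply]; exact hX x
    | mul u v hu hv => rw [map_mul]; exact hu.mul_right hv
    | add u v hu hv => rw [map_add]; exact hu.add_right hv
  rw [Subalgebra.mem_center_iff]
  intro y
  exact (hall y).symm
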